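/- For all nonzero integers m and all positive integers n, the sum over k from 1 to n of m^k * ((m-64)k^3 - 32k^2 + 16k + 8) / ((2k+1)^2 * k^3 * C(2k,k)^3) equals m^{n+1} / ((2n+1)^2 * C(2n,n)^3) - m. -/
import Mathlib

lemma choose_rec (n : ℕ) :
    ((n:ℚ)+1) * ((2*(n+1)).choose (n+1) : ℚ) = 2*(2*(n:ℚ)+1) * ((2*n).choose n : ℚ) := by
  have h := Nat.succ_mul_centralBinom_succ n
  simp only [Nat.centralBinom] at h
  have : (((n+1) * (2*(n+1)).choose (n+1) : ℕ) : ℚ) = ((2*(2*n+1) * (2*n).choose n : ℕ) : ℚ) := by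
    exact_mod_cast congrArg (Nat.cast : ℕ → ℚ) h
  push_cast at this
  linarith

theorem stmt_6 (m : ℤ) (hm : m ≠ 0) (n : ℕ) (hn : 1 ≤ n) :
    ∑ k ∈ Finset.Icc 1 n,
      ((m : ℚ) ^ k * (((m : ℚ) - 64) * k ^ 3 - 32 * k ^ 2 + 16 * k + 8)) /
        ((2 * (k : ℚ) + 1) ^ 2 * (k : ℚ) ^ 3 * ((2 * k).choose k : ℚ) ^ 3)
      = (m : ℚ) ^ (n + 1) / ((2 * (n : ℚ) + 1) ^ 2 * ((2 * n).choose n : ℚ) ^ 3) - (m : ℚ) := by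
  induction n, hn using Nat.le_induction with
  | base =>
    norm_num [Finset.Icc_self]
    ring
  | succ n hn ih =>
    rw [Finset.sum_Icc_succ_top (by omega), ih]
    have hC1 : ((2*n).choose n : ℚ) ≠ 0 := by
      exact_mod_cast (Nat.choose_pos (by omega)).ne'
    have hC2 : ((2*(n+1)).choose (n+1) : ℚ) ≠ 0 := by
      exact_mod_cast (Nat.choose_pos (by omega)).ne'
    have key := choose_rec n
    have h1 : (2*(n:ℚ)+1) ≠ 0 := by positivity
    have h2 : (2*(n:ℚ)+3) ≠ 0 := by positivity
    have h3 : ((n:ℚ)+1) ≠ 0 := by positivity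
    have hd : ((2*(n+1)).choose (n+1) : ℚ) = 2*(2*(n:ℚ)+1) * ((2*n).choose n : ℚ) / ((n:ℚ)+1) := by
      field_simp
      linarith [key]
    push_cast
    rw [hd]
    field_simp
    ring
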